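/- Let d ≥ 2 and D ∈ ℝ with D ≠ 0. With μ = -λ > 0 and C_- = (e^{2√(dμ)} - e^{D+√(dμ)})/(e^{D+√(dμ)} - 1), the limit as λ → 0⁻ of |ln(((e^{√(dμ)}/√(-C_-) + 1)(-1/√(-C_-) + 1))/((1 - e^{√(dμ)}/√(-C_-))(1 + 1/√(-C_-))))| equals |D|. -/

import Mathlib

open Real Set Filter Topology

lemma aux_key (t u r : ℝ) (ht : 1 < t) (hu : 0 < u)
    (hr : 0 < r) (hr2 : r ^ 2 * (u - 1) = u - t ^ 2) (hrt : r ≠ t) :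
    ((t / r + 1) * (-1 / r + 1)) / ((1 - t / r) * (1 + 1 / r)) =
      (t + r) ^ 2 / (u * (1 + r) ^ 2) := by
  have hr0 : r ≠ 0 := hr.ne'
  have h1r : (1 : ℝ) + r ≠ 0 := by positivity
  have htr : r - t ≠ 0 := sub_ne_zero.mpr hrt
  have htr' : t + r ≠ 0 := by positivity
  have hu0 : u ≠ 0 := hu.ne'
  field_simp
  ring_nf
  nlinarith [hr2, sq_nonneg (t + r), sq_nonneg r]

theorem stmt_10 (d : ℕ) (hd : 2 ≤ d) (D : ℝ) (hD : D ≠ 0) :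
    Filter.Tendsto
      (fun lam : ℝ =>
        |Real.log
          (((Real.exp (Real.sqrt (d * (-lam))) /
                Real.sqrt (-((Real.exp (2 * Real.sqrt (d * (-lam))) -
                    Real.exp (D + Real.sqrt (d * (-lam)))) /
                  (Real.exp (D + Real.sqrt (d * (-lam))) - 1))) + 1) *
              (-1 / Real.sqrt (-((Real.exp (2 * Real.sqrt (d * (-lam))) -
                    Real.exp (D + Real.sqrt (d * (-lam)))) /
                  (Real.exp (D + Real.sqrt (d * (-lam))) - 1))) + 1)) /
            ((1 - Real.exp (Real.sqrt (d * (-lam))) /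
                Real.sqrt (-((Real.exp (2 * Real.sqrt (d * (-lam))) -
                    Real.exp (D + Real.sqrt (d * (-lam)))) /
                  (Real.exp (D + Real.sqrt (d * (-lam))) - 1)))) *
              (1 + 1 / Real.sqrt (-((Real.exp (2 * Real.sqrt (d * (-lam))) -
                    Real.exp (D + Real.sqrt (d * (-lam)))) /
                  (Real.exp (D + Real.sqrt (d * (-lam))) - 1))))))|)
      (nhdsWithin 0 (Set.Iio 0)) (nhds |D|) := by
  have hd0 : (0 : ℝ) < d := by positivity
  set S : ℝ → ℝ := fun lam => Real.sqrt (d * -lam) with hS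
  set R : ℝ → ℝ := fun lam =>
    Real.sqrt (-((Real.exp (2 * S lam) - Real.exp (D + S lam)) /
      (Real.exp (D + S lam) - 1))) with hR
  -- S tends to 0
  have hs : Tendsto S (𝓝[<] (0:ℝ)) (𝓝 0) := by
    have : ContinuousAt S 0 := by
      apply (Real.continuous_sqrt.continuousAt).comp
      fun_prop
    have h0 : S 0 = 0 := by simp [hS]
    simpa [h0] using this.tendsto.mono_left nhdsWithin_le_nhds
  have heD : Real.exp D - 1 ≠ 0 := by
    have : Real.exp D ≠ 1 := fun h => hD (Real.exp_injective (by simpa using h))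
    exact sub_ne_zero.mpr this
  -- R tends to 1
  have hr : Tendsto R (𝓝[<] (0:ℝ)) (𝓝 1) := by
    have h1 : Tendsto (fun s : ℝ =>
        Real.sqrt (-((Real.exp (2 * s) - Real.exp (D + s)) / (Real.exp (D + s) - 1))))
        (𝓝 0) (𝓝 1) := by
      have hc : ContinuousAt (fun s : ℝ =>
          Real.sqrt (-((Real.exp (2 * s) - Real.exp (D + s)) / (Real.exp (D + s) - 1)))) 0 := by
        apply (Real.continuous_sqrt.continuousAt).comp
        apply ContinuousAt.neg
        apply ContinuousAt.div
        · fun_prop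
        · fun_prop
        · simpa using heD
      have hval : Real.sqrt (-((1 - Real.exp D) / (Real.exp D - 1))) = 1 := by
        rw [show -((1 - Real.exp D) / (Real.exp D - 1)) = 1 by field_simp; ring]
        exact Real.sqrt_one
      simpa [hval] using hc.tendsto
    exact h1.comp hs
  -- the simplified function tends to exp (-D)
  have hexpS : Tendsto (fun lam => Real.exp (S lam)) (𝓝[<] (0:ℝ)) (𝓝 1) := by
    simpa [Function.comp_def] using (Real.continuous_exp.continuousAt (x := (0:ℝ))).tendsto.comp hs
  have hexpDS : Tendsto (fun lam => Real.exp (D + S lam)) (𝓝[<] (0:ℝ)) (𝓝 (Real.exp D)) := by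
    have : Tendsto (fun lam => D + S lam) (𝓝[<] (0:ℝ)) (𝓝 (D + 0)) := tendsto_const_nhds.add hs
    simpa [Function.comp_def] using (Real.continuous_exp.continuousAt (x := D)).tendsto.comp (by simpa using this)
  have hG : Tendsto (fun lam => (Real.exp (S lam) + R lam) ^ 2 /
      (Real.exp (D + S lam) * (1 + R lam) ^ 2)) (𝓝[<] (0:ℝ)) (𝓝 (Real.exp (-D))) := by
    have hnum : Tendsto (fun lam => (Real.exp (S lam) + R lam) ^ 2)
        (𝓝[<] (0:ℝ)) (𝓝 ((1 + 1) ^ 2)) := (hexpS.add hr).pow 2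
    have hden : Tendsto (fun lam => Real.exp (D + S lam) * (1 + R lam) ^ 2)
        (𝓝[<] (0:ℝ)) (𝓝 (Real.exp D * (1 + 1) ^ 2)) :=
      hexpDS.mul ((tendsto_const_nhds.add hr).pow 2)
    have h := hnum.div hden (by positivity)
    have : ((1:ℝ) + 1) ^ 2 / (Real.exp D * (1 + 1) ^ 2) = Real.exp (-D) := by
      rw [Real.exp_neg]
      field_simp
    rwa [this] at h
  have hL : Tendsto (fun lam => |Real.log ((Real.exp (S lam) + R lam) ^ 2 /
      (Real.exp (D + S lam) * (1 + R lam) ^ 2))|) (𝓝[<] (0:ℝ)) (𝓝 |D|) := by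
    have hlog : Tendsto (fun lam => Real.log ((Real.exp (S lam) + R lam) ^ 2 /
        (Real.exp (D + S lam) * (1 + R lam) ^ 2))) (𝓝[<] (0:ℝ)) (𝓝 (-D)) := by
      have := (Real.continuousAt_log (x := Real.exp (-D)) (Real.exp_pos _).ne').tendsto.comp hG
      simpa [Real.log_exp, Function.comp_def] using this
    have := (continuous_abs.continuousAt (x := -D)).tendsto.comp hlog
    simpa [abs_neg, Function.comp_def] using this
  refine hL.congr' ?_
  have hmem : Set.Ioo (-(D ^ 2 / (4 * d))) (0:ℝ) ∈ 𝓝[<] (0:ℝ) := by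
    apply Ioo_mem_nhdsLT_of_mem
    constructor
    · have : 0 < D ^ 2 / (4 * d) := by positivity
      linarith
    · exact le_refl 0
  filter_upwards [hmem] with lam hlam
  obtain ⟨hlam1, hlam2⟩ := hlam
  have hμ : 0 < -lam := by linarith
  have hs0 : 0 < S lam := Real.sqrt_pos.mpr (by positivity)
  have hsD : S lam < |D| / 2 := by
    have habs : 0 < |D| / 2 := by positivity
    rw [hS]
    rw [show |D| / 2 = Real.sqrt ((|D| / 2) ^ 2) from (Real.sqrt_sq habs.le).symm]
    apply Real.sqrt_lt_sqrt (by positivity)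
    have : (|D| / 2) ^ 2 = D ^ 2 / 4 := by
      rw [div_pow, sq_abs]; norm_num
    rw [this]
    have h2 : -lam < D ^ 2 / (4 * d) := by linarith
    calc (d : ℝ) * -lam < d * (D ^ 2 / (4 * d)) := by
          exact mul_lt_mul_of_pos_left h2 hd0
      _ = D ^ 2 / 4 := by field_simp
  set s := S lam with hseq
  set t := Real.exp s with hts
  set u := Real.exp (D + s) with hu
  have ht1 : 1 < t := by rw [hts, ← Real.exp_zero]; exact Real.exp_lt_exp.mpr hs0
  have hu0 : 0 < u := Real.exp_pos _
  have ht2 : Real.exp (2 * s) = t ^ 2 := by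
    rw [hts, sq, ← Real.exp_add, two_mul]
  -- signs
  have hX : 0 < (u - t ^ 2) / (u - 1) ∧ u - 1 ≠ 0 := by
    rcases hD.lt_or_gt with hDneg | hDpos
    · have habs : |D| = -D := abs_of_neg hDneg
      have h1 : D + s < 0 := by rw [habs] at hsD; linarith
      have h2 : D + s < 2 * s := by linarith
      have hu1 : u < 1 := by rw [hu, ← Real.exp_zero]; exact Real.exp_lt_exp.mpr h1
      have hut : u < t ^ 2 := by rw [hu, ← ht2]; exact Real.exp_lt_exp.mpr h2
      exact ⟨div_pos_of_neg_of_neg (by linarith) (by linarith), by intro h; nlinarith⟩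
    · have habs : |D| = D := abs_of_pos hDpos
      have h1 : 0 < D + s := by linarith
      have h2 : 2 * s < D + s := by rw [habs] at hsD; linarith
      have hu1 : 1 < u := by rw [hu, ← Real.exp_zero]; exact Real.exp_lt_exp.mpr h1
      have hut : t ^ 2 < u := by rw [hu, ← ht2]; exact Real.exp_lt_exp.mpr h2
      exact ⟨div_pos (by linarith) (by linarith), by intro h; nlinarith⟩
  obtain ⟨hXpos, hu1⟩ := hX
  have hRval : R lam = Real.sqrt ((u - t ^ 2) / (u - 1)) := by
    have : R lam = Real.sqrt (-((Real.exp (2 * s) - u) / (u - 1))) := rfl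
    rw [this, ht2]
    congr 1
    ring
  have hr0 : 0 < R lam := by rw [hRval]; exact Real.sqrt_pos.mpr hXpos
  have hr2 : (R lam) ^ 2 * (u - 1) = u - t ^ 2 := by
    rw [hRval, Real.sq_sqrt hXpos.le]
    field_simp
  have hrt : R lam ≠ t := by
    intro h
    rw [h] at hr2
    have h1 : u * (t ^ 2 - 1) = 0 := by linear_combination hr2
    have h2 : 0 < u * (t ^ 2 - 1) := mul_pos hu0 (by nlinarith)
    linarith
  have key := aux_key t u (R lam) ht1 hu0 hr0 hr2 hrt
  rw [key]
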